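/- Let a > 1/2 be real and define R_a = a − 1/2 if 1/2 < a ≤ 3/2, and R_a = √(2a − 2) if a ≥ 3/2. Then the open disk {w ∈ ℂ : |w − a| < R_a} is contained in the parabolic region {w ∈ ℂ : |w − 1| < Re w}. -/

import Mathlib

open Real

theorem parabolic_disk_inclusion (a : ℝ) (ha : 1 / 2 < a) (Ra : ℝ)
    (hRa : (1 / 2 < a ∧ a ≤ 3 / 2 → Ra = a - 1 / 2) ∧
      (3 / 2 ≤ a → Ra = Real.sqrt (2 * a - 2))) :
    {w : ℂ | ‖w - (a : ℂ)‖ < Ra} ⊆ {w : ℂ | ‖w - 1‖ < w.re} := by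
  intro w hw
  simp only [Set.mem_setOf_eq] at hw ⊢
  set x := w.re with hx
  set y := w.im with hy
  have habs : 0 ≤ ‖w - a‖ := norm_nonneg _
  have hsq : (x - a) ^ 2 + y ^ 2 < Ra ^ 2 := by
    have h1 : (‖w - a‖) ^ 2 < Ra ^ 2 := by nlinarith
    rw [Complex.sq_norm, Complex.normSq_apply] at h1
    simp only [Complex.sub_re, Complex.sub_im, Complex.ofReal_re, Complex.ofReal_im] at h1
    nlinarith
  have key : 0 < x ∧ (x - 1) ^ 2 + y ^ 2 < x ^ 2 := by
    rcases le_or_gt a (3 / 2) with hcase | hcase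
    · have hR : Ra = a - 1 / 2 := hRa.1 ⟨ha, hcase⟩
      rw [hR] at hsq
      have hx2 : 1 / 2 < x := by nlinarith [sq_nonneg y]
      constructor
      · linarith
      · nlinarith [mul_pos (show (0:ℝ) < x - 1 / 2 by linarith)
          (show (0:ℝ) < x + 5 / 2 - 2 * a by linarith)]
    · have hR : Ra = Real.sqrt (2 * a - 2) := hRa.2 hcase.le
      have hR2 : Ra ^ 2 = 2 * a - 2 := by
        rw [hR]; exact Real.sq_sqrt (by linarith)
      rw [hR2] at hsq
      have hx2 : 0 < x := by nlinarith [sq_nonneg y, sq_nonneg (a - 1)]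
      exact ⟨hx2, by nlinarith [sq_nonneg (x - a + 1)]⟩
  have hfin : (‖w - 1‖) ^ 2 < x ^ 2 := by
    rw [Complex.sq_norm, Complex.normSq_apply]
    simp only [Complex.sub_re, Complex.sub_im, Complex.one_re, Complex.one_im]
    nlinarith [key.2]
  exact lt_of_pow_lt_pow_left₀ 2 key.1.le hfin
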